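/- Let H ≥ 2 be an integer and J = {0,1} ∪ {2H-1, 2H}. Then for every positive integer h, hJ = ⋃_{i=0}^{h} (2Hi + [-i, h-i]), where [a,b] denotes the integer interval. -/
import Mathlib

open Finset Pointwise

/-- `hsum h A` is the `h`-fold sumset of `A` (pointwise sum of `h` copies). -/
def hsum (h : ℕ) (A : Finset ℤ) : Finset ℤ := ∑ _i ∈ Finset.range h, A

/-- `transl t A` is the translate `t + A`. -/
def transl (t : ℤ) (A : Finset ℤ) : Finset ℤ := A.image (t + ·)

lemma mem_hsum_iff (M : ℤ) (h : ℕ) (x : ℤ) :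
    x ∈ hsum h ({0, 1} ∪ {M - 1, M} : Finset ℤ) ↔
      ∃ i : ℕ, i ≤ h ∧ M * i - i ≤ x ∧ x ≤ M * i + ((h : ℤ) - i) := by
  induction h generalizing x with
  | zero =>
    simp only [hsum, Finset.range_zero, Finset.sum_empty]
    constructor
    · intro hx
      refine ⟨0, le_refl _, ?_, ?_⟩ <;>
        simp_all [Finset.mem_zero]
    · rintro ⟨i, hi, h1, h2⟩
      interval_cases i
      simp only [Finset.mem_zero]
      push_cast at h1 h2
      omega
  | succ h ih =>
    have hsucc : hsum (h+1) ({0, 1} ∪ {M - 1, M} : Finset ℤ)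
        = hsum h ({0, 1} ∪ {M - 1, M} : Finset ℤ) + ({0, 1} ∪ {M - 1, M} : Finset ℤ) := by
      unfold hsum; rw [Finset.sum_range_succ]
    rw [hsucc, Finset.mem_add]
    constructor
    · rintro ⟨a, ha, b, hb, rfl⟩
      rw [ih] at ha
      obtain ⟨i, hi, h1, h2⟩ := ha
      simp only [Finset.mem_union, Finset.mem_insert, Finset.mem_singleton] at hb
      rcases hb with (rfl | rfl) | (rfl | hb4)
      · refine ⟨i, by omega, ?_, ?_⟩ <;> (push_cast; set t := M * (i:ℤ) with ht; omega)
      · refine ⟨i, by omega, ?_, ?_⟩ <;> (push_cast; set t := M * (i:ℤ) with ht; omega)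
      · refine ⟨i + 1, by omega, ?_, ?_⟩ <;>
          (push_cast; rw [mul_add, mul_one]; set t := M * (i:ℤ) with ht; omega)
      · refine ⟨i + 1, by omega, ?_, ?_⟩ <;>
          (push_cast; rw [mul_add, mul_one]; set t := M * (i:ℤ) with ht;
           rw [hb4] at *; omega)
    · rintro ⟨i, hi, h1, h2⟩
      simp only [Finset.mem_union, Finset.mem_insert, Finset.mem_singleton]
      rcases Nat.eq_zero_or_pos i with rfl | hpos
      · push_cast at h1 h2
        simp only [mul_zero] at h1 h2
        by_cases hx : x ≤ (h : ℤ)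
        · refine ⟨x, ?_, 0, by simp, by ring⟩
          rw [ih]
          exact ⟨0, by omega, by push_cast; simp; omega, by push_cast; simp; omega⟩
        · refine ⟨x - 1, ?_, 1, by simp, by ring⟩
          rw [ih]
          exact ⟨0, by omega, by push_cast; simp; omega, by push_cast; simp; omega⟩
      · obtain ⟨j, rfl⟩ : ∃ j, i = j + 1 := ⟨i - 1, by omega⟩
        push_cast at h1 h2
        rw [mul_add, mul_one] at h1 h2
        by_cases hx : x ≤ M * (j:ℤ) + M + ((h:ℤ) + 1) - ((j:ℤ) + 1) - 1
        · refine ⟨x - (M - 1), ?_, M - 1, by simp, by ring⟩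
          rw [ih]
          refine ⟨j, by omega, ?_, ?_⟩ <;> (push_cast; set t := M * (j:ℤ) with ht; omega)
        · refine ⟨x - M, ?_, M, by simp, by ring⟩
          rw [ih]
          refine ⟨j, by omega, ?_, ?_⟩ <;> (push_cast; set t := M * (j:ℤ) with ht; omega)

theorem stmt_7 (H : ℕ) (hH : 2 ≤ H) (h : ℕ) (hh : 1 ≤ h) :
    hsum h ({0, 1} ∪ {2 * (H : ℤ) - 1, 2 * (H : ℤ)}) =
      (Finset.range (h + 1)).biUnion fun i =>
        Finset.Icc (2 * (H : ℤ) * i - i) (2 * (H : ℤ) * i + ((h : ℤ) - i)) := by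
  ext x
  rw [mem_hsum_iff]
  simp only [Finset.mem_biUnion, Finset.mem_range, Finset.mem_Icc, Nat.lt_succ_iff]
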